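/- Let φ be a topologically exact continuous map on a compact metric space X. Then for every x₀ ∈ X there exists a backward orbit (..., x₋₂, x₋₁, x₀) with φ(x₋ᵢ₋₁ ) giving x₋ᵢ along the orbit (i.e., a sequence (x₋ᵢ)_{i≥0} with φ^{j}(x_{-i}) = x_{-i+j} appropriately, equivalently x₋ᵢ ∈ φ⁻¹(x₋ᵢ₊₁) for each i) whose image {x₋ᵢ : i ∈ ℕ} is dense in X. -/

import Mathlib

open Set Metric Filter Topology

/-- Auxiliary block sequence: `auxSeq z j x₀ k = (nₖ, yₖ)` where `yₖ` is the point at depth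
`nₖ` of the backward orbit under construction. -/
private def auxSeq {X : Type*} (z : X → ℕ → X) (j : X → ℕ → ℕ) (x₀ : X) : ℕ → ℕ × X
  | 0 => (0, x₀)
  | k+1 => ((auxSeq z j x₀ k).1 + j (auxSeq z j x₀ k).2 k + 1, z (auxSeq z j x₀ k).2 k)

/-- every point of a compact metric space admits a backward orbit, under a
topologically exact continuous map, whose image is dense. -/
theorem stmt8 {X : Type*} [MetricSpace X] [CompactSpace X] [Nonempty X]
    (φ : X → X) (hc : Continuous φ)
    (hexact : ∀ W : Set X, IsOpen W → W.Nonempty → ∃ j : ℕ, φ^[j] '' W = univ)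
    (x₀ : X) :
    ∃ x : ℕ → X, x 0 = x₀ ∧ (∀ i : ℕ, φ (x (i + 1)) = x i) ∧
      Dense (Set.range x) := by
  classical
  obtain ⟨u, hu⟩ := TopologicalSpace.exists_dense_seq X
  set e : ℕ → ℕ × ℕ := fun n => (Denumerable.eqv (ℕ × ℕ)).symm n with he
  have hesurj : Function.Surjective e := (Denumerable.eqv (ℕ × ℕ)).symm.surjective
  -- φ is surjective
  have hsurj : Function.Surjective φ := by
    by_cases h : ∃ a b : X, a ≠ b
    · obtain ⟨p, q, hpq⟩ := h
      obtain ⟨j0, hj0⟩ := hexact (ball p (dist p q)) isOpen_ball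
        ⟨p, mem_ball_self (dist_pos.2 hpq)⟩
      match j0, hj0 with
      | 0, hj0 =>
          exfalso
          rw [Function.iterate_zero, image_id] at hj0
          have : q ∈ ball p (dist p q) := by rw [hj0]; trivial
          simp [mem_ball, dist_comm] at this
      | (j'+1), hj0 =>
          intro y
          have : y ∈ φ^[j'+1] '' ball p (dist p q) := hj0 ▸ mem_univ y
          obtain ⟨w, _, hw⟩ := this
          exact ⟨φ^[j'] w, by rw [Function.iterate_succ_apply'] at hw; exact hw⟩
    · push_neg at h
      exact fun y => ⟨y, h _ _⟩
  -- key existence: from any point one can go back into any prescribed ball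
  have key : ∀ (y : X) (k : ℕ), ∃ zz : X, ∃ jj : ℕ,
      zz ∈ ball (u (e k).1) (1 / ((e k).2 + 1 : ℝ)) ∧ φ^[jj+1] zz = y := by
    intro y k
    obtain ⟨j0, hj0⟩ := hexact (ball (u (e k).1) (1 / ((e k).2 + 1 : ℝ))) isOpen_ball
      ⟨u (e k).1, mem_ball_self (by positivity)⟩
    obtain ⟨y', hy'⟩ := hsurj y
    have : y' ∈ φ^[j0] '' ball (u (e k).1) (1 / ((e k).2 + 1 : ℝ)) := hj0 ▸ mem_univ y'
    obtain ⟨zz, hzz, hzzy⟩ := this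
    exact ⟨zz, j0, hzz, by rw [Function.iterate_succ_apply', hzzy, hy']⟩
  choose z j hzmem hzit using key
  set a : ℕ → ℕ × X := auxSeq z j x₀ with ha
  have ha0 : a 0 = (0, x₀) := rfl
  have ha1 : ∀ k, a (k+1) = ((a k).1 + j (a k).2 k + 1, z (a k).2 k) := fun k => rfl
  have compat : ∀ k, φ^[(a (k+1)).1 - (a k).1] (a (k+1)).2 = (a k).2 := by
    intro k
    rw [ha1 k]
    have hsub : (a k).1 + j (a k).2 k + 1 - (a k).1 = j (a k).2 k + 1 := by omega
    simp only [hsub]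
    exact hzit (a k).2 k
  have hmono : ∀ k, (a k).1 < (a (k+1)).1 := by
    intro k; rw [ha1 k]; simp
  have hsm : StrictMono (fun k => (a k).1) := strictMono_nat_of_lt_succ hmono
  have hk : ∀ k, k ≤ (a k).1 := by
    intro k
    induction k with
    | zero => simp
    | succ n ih => have := hmono n; omega
  have L : ∀ d k m, m ≤ (a k).1 →
      φ^[(a (k+d)).1 - m] (a (k+d)).2 = φ^[(a k).1 - m] (a k).2 := by
    intro d
    induction d with
    | zero => intro k m _; rfl
    | succ d ih =>
        intro k m hm
        have h1 : (a k).1 ≤ (a (k+d)).1 := hsm.monotone (Nat.le_add_right k d)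
        have h2 : (a (k+d)).1 ≤ (a (k+d+1)).1 := (hmono (k+d)).le
        have heq : (a (k+d+1)).1 - m
            = ((a (k+d)).1 - m) + ((a (k+d+1)).1 - (a (k+d)).1) := by omega
        rw [show k + (d+1) = (k+d)+1 from rfl, heq, Function.iterate_add_apply,
          compat (k+d), ih k m hm]
  refine ⟨fun m => φ^[(a (m+1)).1 - m] (a (m+1)).2, ?_, ?_, ?_⟩
  · have := L 1 0 0 (Nat.zero_le _)
    simpa [ha0] using this
  · intro i
    show φ (φ^[(a (i+2)).1 - (i+1)] (a (i+2)).2) = φ^[(a (i+1)).1 - i] (a (i+1)).2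
    rw [← Function.iterate_succ_apply' φ ((a (i+2)).1 - (i+1)) (a (i+2)).2]
    have hsub : (a (i+2)).1 - (i+1) + 1 = (a (i+2)).1 - i := by
      have := hk (i+2); omega
    rw [Nat.succ_eq_add_one, hsub]
    exact L 1 (i+1) i (by have := hk (i+1); omega)
  · rw [Metric.dense_iff]
    intro p r hr
    obtain ⟨n, hn⟩ := hu.exists_dist_lt p (half_pos hr)
    obtain ⟨m, hm⟩ := exists_nat_one_div_lt (half_pos hr)
    obtain ⟨k, hke⟩ := hesurj (n, m)
    have hmem : (a (k+1)).2 ∈ ball (u (e k).1) (1 / ((e k).2 + 1 : ℝ)) := by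
      rw [ha1 k]; exact hzmem (a k).2 k
    rw [hke] at hmem
    refine ⟨(a (k+1)).2, ?_, ?_⟩
    · rw [mem_ball]
      calc dist (a (k+1)).2 p ≤ dist (a (k+1)).2 (u n) + dist (u n) p := dist_triangle _ _ _
        _ < 1 / ((m : ℝ) + 1) + r/2 := by
            refine add_lt_add (mem_ball.1 hmem) ?_
            rw [dist_comm]; exact hn
        _ < r/2 + r/2 := by linarith
        _ = r := by ring
    · refine ⟨(a (k+1)).1, ?_⟩
      set N := (a (k+1)).1 with hN
      have hd : (k+1) + (N + 1 - (k+1)) = N + 1 := by have := hk (k+1); omega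
      have := L (N + 1 - (k+1)) (k+1) N le_rfl
      rw [hd] at this
      simpa [← hN] using this
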